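/- (Borel subgradient selection) Let X be a Polish space and g : X × ℝ^n → ℝ lower semi-analytic. Assume that for every x ∈ X: the section y ↦ g(x,y) is convex, g(x,0) = 0, and the subdifferential ∂_y g(x,0) at the origin is nonempty. Then there exists a Borel measurable map p : X → ℝ^n with p(x) ∈ ∂_y g(x,0) for every x ∈ X, i.e. g(x,y) ≥ p(x)·y for all x ∈ X and y ∈ ℝ^n. -/

import Mathlib

open MeasureTheory

open Set in
lemma analyticSet_preimage_measurable {Z W : Type*}
    [tZ : TopologicalSpace Z] [PolishSpace Z] [MeasurableSpace Z] [BorelSpace Z]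
    [TopologicalSpace W] [PolishSpace W] [MeasurableSpace W] [BorelSpace W]
    {A : Set W} (hA : AnalyticSet A) {F : Z → W} (hF : Measurable F) :
    AnalyticSet (F ⁻¹' A) := by
  obtain ⟨t', ht', hFc, hPol⟩ := hF.exists_continuous
  have h1 : @AnalyticSet Z t' (F ⁻¹' A) :=
    @AnalyticSet.preimage Z W t' _ hPol _ _ hA F hFc
  have h2 := @AnalyticSet.image_of_continuous Z t' Z tZ _ h1 id (continuous_id_of_le ht')
  simpa using h2

lemma analyticSet_inter {α : Type*} [TopologicalSpace α] [T2Space α] {s t : Set α}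
    (hs : AnalyticSet s) (ht : AnalyticSet t) : AnalyticSet (s ∩ t) := by
  have : s ∩ t = ⋂ b : Bool, (bif b then s else t) := by
    ext x; simp [Bool.forall_bool, and_comm]
  rw [this]
  exact AnalyticSet.iInter (fun b => by cases b <;> simpa)

open Set in
-- epigraph-type analytic set
lemma epi_analytic {X : Type*} [TopologicalSpace X] [PolishSpace X]
    [MeasurableSpace X] [BorelSpace X] {m : ℕ} (g : X → (Fin m → ℝ) → ℝ)
    (hlsa : ∀ γ : ℝ, AnalyticSet {p : X × (Fin m → ℝ) | g p.1 p.2 < γ}) :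
    AnalyticSet {q : (X × (Fin m → ℝ)) × ℝ | g q.1.1 q.1.2 < q.2} := by
  have : {q : (X × (Fin m → ℝ)) × ℝ | g q.1.1 q.1.2 < q.2}
      = ⋃ r : ℚ, (Prod.fst ⁻¹' {p : X × (Fin m → ℝ) | g p.1 p.2 < (r : ℝ)}
          ∩ Prod.snd ⁻¹' Ioi (r : ℝ)) := by
    ext q
    simp only [mem_iUnion, mem_inter_iff, mem_preimage, mem_setOf_eq, mem_Ioi]
    exact ⟨fun h => exists_rat_btwn h, fun ⟨r, h1, h2⟩ => h1.trans h2⟩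
  rw [this]
  refine AnalyticSet.iUnion fun r => analyticSet_inter ?_ ?_
  · exact (hlsa (r : ℝ)).preimage continuous_fst
  · exact (measurable_snd (measurableSet_Ioi (a := (r:ℝ)))).analyticSet

open Set in
-- slope monotonicity
lemma slope_mono {E : Type*} [AddCommGroup E] [Module ℝ E] {f : E → ℝ}
    (hconv : ConvexOn ℝ Set.univ f) (hzero : f 0 = 0) (y : E) {s t : ℝ}
    (hs : 0 < s) (hst : s ≤ t) : f (s • y) / s ≤ f (t • y) / t := by
  have ht : 0 < t := hs.trans_le hst
  have hd1 : (0:ℝ) ≤ s / t := (div_pos hs ht).le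
  have hd2 : (0:ℝ) ≤ 1 - s / t := by
    have : s / t ≤ 1 := (div_le_one ht).2 hst
    linarith
  have key : f (s • y) ≤ s / t * f (t • y) := by
    have h1 : (s / t) • (t • y) + (1 - s / t) • (0 : E) = s • y := by
      rw [smul_zero, add_zero, smul_smul, div_mul_cancel₀]
      exact ht.ne'
    have h2 := hconv.2 (Set.mem_univ (t • y)) (Set.mem_univ (0 : E)) hd1 hd2 (by ring)
    rw [h1] at h2
    simpa [hzero, smul_eq_mul] using h2
  rw [div_le_div_iff₀ hs ht]
  calc f (s • y) * t ≤ (s / t * f (t • y)) * t := by nlinarith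
    _ = f (t • y) * s := by field_simp

-- rational point with small value
lemma rat_lt_of_convex {F : ℝ → ℝ} (hF : ConvexOn ℝ Set.univ F) {t γ : ℝ}
    (h : F t < γ) : ∃ u : ℚ, F (u : ℝ) < γ := by
  set M := F (t + 1) with hM
  set d := γ - F t with hd
  have hdpos : 0 < d := by simp only [hd]; linarith
  have hbpos : 0 < |M - F t| + 1 := by positivity
  set e := min 1 (d / (|M - F t| + 1)) with he
  have hepos : 0 < e := lt_min one_pos (div_pos hdpos hbpos)
  obtain ⟨u, hu1, hu2⟩ := exists_rat_btwn (show t < t + e by linarith)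
  refine ⟨u, ?_⟩
  set l : ℝ := (u : ℝ) - t with hl
  have hl0 : 0 < l := by simp only [hl, sub_pos]; exact hu1
  have hle : l < e := by simp only [hl]; linarith
  have hl1 : l < 1 := lt_of_lt_of_le hle (min_le_left _ _)
  have hl2 : l < d / (|M - F t| + 1) := lt_of_lt_of_le hle (min_le_right _ _)
  have hcomb : (1 - l) • t + l • (t + 1) = (u : ℝ) := by
    simp only [smul_eq_mul, hl]; ring
  have h2 := hF.2 (Set.mem_univ t) (Set.mem_univ (t + 1))
    (by linarith : (0:ℝ) ≤ 1 - l) hl0.le (by ring)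
  rw [hcomb] at h2
  simp only [smul_eq_mul] at h2
  have h3 : F (u : ℝ) ≤ F t + l * (M - F t) := by rw [hM]; linarith
  have h4 : l * (M - F t) ≤ l * (|M - F t| + 1) := by
    have := le_abs_self (M - F t)
    nlinarith
  have h5 : l * (|M - F t| + 1) < d := by
    rw [lt_div_iff₀ hbpos] at hl2
    linarith
  simp only [hd] at h5
  linarith

open Set in
/-- Hahn–Banach step: a subgradient with prescribed first coordinate. -/
lemma exists_subgrad_fix0 {m : ℕ} (f : (Fin (m + 1) → ℝ) → ℝ)
    (hconv : ConvexOn ℝ Set.univ f) (hzero : f 0 = 0)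
    (q : Fin (m + 1) → ℝ) (hq : ∀ y, (∑ i, q i * y i) ≤ f y)
    (c : ℝ) (hc : ∀ t : ℝ, c * t ≤ f (t • (Pi.single 0 1 : Fin (m + 1) → ℝ))) :
    ∃ p : Fin (m + 1) → ℝ, p 0 = c ∧ ∀ y, (∑ i, p i * y i) ≤ f y := by
  classical
  set e : Fin (m + 1) → ℝ := (Pi.single 0 1 : Fin (m + 1) → ℝ) with hedef
  have he : e ≠ 0 := by
    intro h
    have h0 : e 0 = (0 : ℝ) := by rw [h]; rfl
    rw [hedef] at h0
    simp at h0
  set Q : (Fin (m + 1) → ℝ) → Set ℝ := fun y => {r | ∃ t : ℝ, 0 < t ∧ r = f (t • y) / t} with hQ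
  have hQne : ∀ y, (Q y).Nonempty := fun y => ⟨f y, 1, one_pos, by simp⟩
  have hQlb : ∀ y, ∀ r ∈ Q y, (∑ i, q i * y i) ≤ r := by
    rintro y r ⟨t, ht, rfl⟩
    have h1 := hq (t • y)
    have h2 : (∑ i, q i * (t • y) i) = t * ∑ i, q i * y i := by
      rw [Finset.mul_sum]
      refine Finset.sum_congr rfl fun i _ => ?_
      simp only [Pi.smul_apply, smul_eq_mul]; ring
    rw [h2] at h1
    rw [le_div_iff₀ ht]
    linarith
  have hQbdd : ∀ y, BddBelow (Q y) := fun y => ⟨_, hQlb y⟩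
  set N : (Fin (m + 1) → ℝ) → ℝ := fun y => sInf (Q y) with hN
  -- N ≤ f
  have hNle : ∀ y, N y ≤ f y := fun y => csInf_le (hQbdd y) ⟨1, one_pos, by simp⟩
  -- homogeneity
  have haux : ∀ a : ℝ, 0 < a → ∀ y : Fin (m + 1) → ℝ, N (a • y) ≤ a * N y := by
    intro a ha y
    have h1 : ∀ r ∈ Q y, N (a • y) ≤ a * r := by
      rintro r ⟨t, ht, rfl⟩
      have hmem : a * (f (t • y) / t) ∈ Q (a • y) := by
        refine ⟨t / a, div_pos ht ha, ?_⟩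
        have : (t / a) • (a • y) = t • y := by
          rw [smul_smul, div_mul_cancel₀]; exact ha.ne'
        rw [this]
        field_simp
      exact csInf_le (hQbdd _) hmem
    have h2 : ∀ r ∈ Q y, N (a • y) / a ≤ r := fun r hr => by
      rw [div_le_iff₀' ha]; exact h1 r hr
    have := le_csInf (hQne y) h2
    rw [div_le_iff₀' ha] at this
    exact this.trans_eq rfl
  have N_hom : ∀ a : ℝ, 0 < a → ∀ y : Fin (m + 1) → ℝ, N (a • y) = a * N y := by
    intro a ha y
    refine le_antisymm (haux a ha y) ?_
    have h2 := haux a⁻¹ (inv_pos.2 ha) (a • y)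
    rw [smul_smul, inv_mul_cancel₀ ha.ne', one_smul] at h2
    calc a * N y ≤ a * (a⁻¹ * N (a • y)) := by
          exact mul_le_mul_of_nonneg_left h2 ha.le
      _ = N (a • y) := by field_simp
  -- subadditivity
  have N_add : ∀ x y : Fin (m + 1) → ℝ, N (x + y) ≤ N x + N y := by
    intro x y
    refine le_of_forall_pos_le_add fun ε hε => ?_
    obtain ⟨r1, hr1Q, hr1⟩ := exists_lt_of_csInf_lt (hQne x)
      (show sInf (Q x) < N x + ε / 2 from lt_add_of_pos_right _ (by linarith))
    obtain ⟨r2, hr2Q, hr2⟩ := exists_lt_of_csInf_lt (hQne y)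
      (show sInf (Q y) < N y + ε / 2 from lt_add_of_pos_right _ (by linarith))
    obtain ⟨t1, ht1, rfl⟩ := hr1Q
    obtain ⟨t2, ht2, rfl⟩ := hr2Q
    set t := min t1 t2 with htdef
    have ht : 0 < t := lt_min ht1 ht2
    have hmem : f ((t / 2) • (x + y)) / (t / 2) ∈ Q (x + y) := ⟨t / 2, by positivity, rfl⟩
    have hsplit : (t / 2) • (x + y) = (1/2 : ℝ) • (t • x) + (1/2 : ℝ) • (t • y) := by
      rw [smul_add, smul_smul, smul_smul]; ring_nf
    have hconv2 := hconv.2 (Set.mem_univ (t • x)) (Set.mem_univ (t • y))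
      (by norm_num : (0:ℝ) ≤ 1/2) (by norm_num : (0:ℝ) ≤ 1/2) (by norm_num)
    rw [← hsplit] at hconv2
    simp only [smul_eq_mul] at hconv2
    have hdiv : f ((t / 2) • (x + y)) / (t / 2) ≤ f (t • x) / t + f (t • y) / t := by
      rw [div_le_iff₀ (by positivity : (0:ℝ) < t / 2)]
      calc f ((t / 2) • (x + y)) ≤ 1/2 * f (t • x) + 1/2 * f (t • y) := hconv2
        _ = (f (t • x) / t + f (t • y) / t) * (t / 2) := by field_simp
    have hm1 : f (t • x) / t ≤ f (t1 • x) / t1 :=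
      slope_mono hconv hzero x ht (min_le_left _ _)
    have hm2 : f (t • y) / t ≤ f (t2 • y) / t2 :=
      slope_mono hconv hzero y ht (min_le_right _ _)
    have : N (x + y) ≤ f ((t / 2) • (x + y)) / (t / 2) := csInf_le (hQbdd _) hmem
    linarith
  -- the partial linear map on the span of e
  set fp : (Fin (m + 1) → ℝ) →ₗ.[ℝ] ℝ := LinearPMap.mkSpanSingleton e c he with hfp
  have hfN : ∀ v : fp.domain, fp v ≤ N v := by
    rintro ⟨v, hv⟩
    obtain ⟨t, rfl⟩ := Submodule.mem_span_singleton.1 hv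
    have happ : fp ⟨t • e, hv⟩ = t • c := by
      exact LinearPMap.mkSpanSingleton'_apply _ _ _ t _
    rw [happ]
    have hlow : ∀ r ∈ Q (t • e), t * c ≤ r := by
      rintro r ⟨s, hs, rfl⟩
      have h1 : s • (t • e) = (s * t) • e := by rw [smul_smul]
      have h2 := hc (s * t)
      rw [h1]
      rw [le_div_iff₀ hs]
      calc t * c * s = c * (s * t) := by ring
        _ ≤ f ((s * t) • e) := h2
    have := le_csInf (hQne (t • e)) hlow
    simpa [smul_eq_mul] using this
  obtain ⟨G, hG1, hG2⟩ := exists_extension_of_le_sublinear fp N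
    (fun a ha y => N_hom a ha y) N_add hfN
  refine ⟨fun i => G (fun j => if i = j then 1 else 0), ?_, ?_⟩
  · have he' : (fun j => if (0 : Fin (m+1)) = j then (1:ℝ) else 0) = e := by
      funext j
      simp [hedef, Pi.single_apply, eq_comm]
    have hmem : e ∈ Submodule.span ℝ {e} := Submodule.mem_span_singleton_self e
    have := hG1 ⟨e, hmem⟩
    rw [LinearPMap.mkSpanSingleton_apply ℝ ℝ he c] at this
    simp only [he']
    exact this
  · intro y
    have hrep := LinearMap.pi_apply_eq_sum_univ G y
    have : (∑ i, G (fun j => if i = j then 1 else 0) * y i) = G y := by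
      rw [hrep]
      refine Finset.sum_congr rfl fun i _ => ?_
      rw [smul_eq_mul, mul_comm]
    calc (∑ i, G (fun j => if i = j then 1 else 0) * y i) = G y := this
      _ ≤ N y := hG2 y
      _ ≤ f y := hNle y

open Set in
theorem selection_main {X : Type*} [TopologicalSpace X] [PolishSpace X]
    [MeasurableSpace X] [BorelSpace X] :
    ∀ (n : ℕ) (g : X → (Fin n → ℝ) → ℝ),
    (∀ γ : ℝ, AnalyticSet {p : X × (Fin n → ℝ) | g p.1 p.2 < γ}) →
    (∀ x, ConvexOn ℝ Set.univ (g x)) →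
    (∀ x, g x 0 = 0) →
    (∀ x, ∃ p : Fin n → ℝ, ∀ y, (∑ i, p i * y i) ≤ g x y) →
    ∃ p : X → Fin n → ℝ, Measurable p ∧ ∀ x y, (∑ i, p x i * y i) ≤ g x y := by
  intro n
  induction n with
  | zero =>
    intro g _ _ hzero _
    refine ⟨fun _ _ => 0, measurable_const, fun x y => ?_⟩
    have hy : y = 0 := funext fun i => i.elim0
    rw [hy]
    simpa using (hzero x).symm.le
  | succ n IH =>
    intro g hlsa hconv hzero hsub
    classical
    set e : Fin (n + 1) → ℝ := (Pi.single 0 1 : Fin (n + 1) → ℝ) with hedef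
    -- sublevel/overlevel sets along the first axis
    set S : ℚ → Set X :=
      fun q => {x | ∃ t : ℚ, 0 < t ∧ g x ((t : ℝ) • e) < (t : ℝ) * (q : ℝ)} with hSdef
    set T : ℚ → Set X :=
      fun q => {x | ∃ t : ℚ, 0 < t ∧ g x ((-(t : ℝ)) • e) < -((t : ℝ) * (q : ℝ))} with hTdef
    have hSa : ∀ q, AnalyticSet (S q) := by
      intro q
      have hrw : S q = ⋃ t : {t : ℚ // 0 < t},
          (fun x => (x, ((t : ℚ) : ℝ) • e)) ⁻¹'
            {p : X × (Fin (n + 1) → ℝ) | g p.1 p.2 < ((t : ℚ) : ℝ) * (q : ℝ)} := by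
        ext x
        simp only [hSdef, mem_setOf_eq, mem_iUnion, mem_preimage]
        exact ⟨fun ⟨t, ht, h⟩ => ⟨⟨t, ht⟩, h⟩, fun ⟨⟨t, ht⟩, h⟩ => ⟨t, ht, h⟩⟩
      rw [hrw]
      exact AnalyticSet.iUnion fun t =>
        (hlsa _).preimage (continuous_id.prodMk continuous_const)
    have hTa : ∀ q, AnalyticSet (T q) := by
      intro q
      have hrw : T q = ⋃ t : {t : ℚ // 0 < t},
          (fun x => (x, (-((t : ℚ) : ℝ)) • e)) ⁻¹'
            {p : X × (Fin (n + 1) → ℝ) | g p.1 p.2 < -(((t : ℚ) : ℝ) * (q : ℝ))} := by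
        ext x
        simp only [hTdef, mem_setOf_eq, mem_iUnion, mem_preimage]
        exact ⟨fun ⟨t, ht, h⟩ => ⟨⟨t, ht⟩, h⟩, fun ⟨⟨t, ht⟩, h⟩ => ⟨t, ht, h⟩⟩
      rw [hrw]
      exact AnalyticSet.iUnion fun t =>
        (hlsa _).preimage (continuous_id.prodMk continuous_const)
    have hdisj : ∀ q, Disjoint (S q) (T q) := by
      intro q
      rw [Set.disjoint_left]
      rintro x ⟨t, ht, hgt⟩ ⟨s, hs, hgs⟩
      have htR : (0:ℝ) < (t : ℝ) := by exact_mod_cast ht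
      have hsR : (0:ℝ) < (s : ℝ) := by exact_mod_cast hs
      have hstR : (0:ℝ) < (s : ℝ) + (t : ℝ) := by linarith
      set a : ℝ := (s : ℝ) / ((s : ℝ) + (t : ℝ)) with hadef
      set b : ℝ := (t : ℝ) / ((s : ℝ) + (t : ℝ)) with hbdef
      have hapos : 0 < a := div_pos hsR hstR
      have hbpos : 0 < b := div_pos htR hstR
      have hab : a + b = 1 := by rw [hadef, hbdef]; field_simp
      have hkey : a • ((t : ℝ) • e) + b • ((-(s : ℝ)) • e) = (0 : Fin (n + 1) → ℝ) := by
        rw [smul_smul, smul_smul, ← add_smul]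
        have : a * (t : ℝ) + b * (-(s : ℝ)) = 0 := by
          rw [hadef, hbdef]; field_simp; ring
        rw [this, zero_smul]
      have hcv := (hconv x).2 (Set.mem_univ ((t : ℝ) • e)) (Set.mem_univ ((-(s : ℝ)) • e))
        hapos.le hbpos.le hab
      rw [hkey, hzero x] at hcv
      simp only [smul_eq_mul] at hcv
      have h1 : a * g x ((t : ℝ) • e) < a * ((t : ℝ) * (q : ℝ)) :=
        mul_lt_mul_of_pos_left hgt hapos
      have h2 : b * g x ((-(s : ℝ)) • e) < b * (-((s : ℝ) * (q : ℝ))) :=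
        mul_lt_mul_of_pos_left hgs hbpos
      have h3 : a * ((t : ℝ) * (q : ℝ)) + b * (-((s : ℝ) * (q : ℝ))) = 0 := by
        rw [hadef, hbdef]; field_simp; ring
      linarith
    -- Lusin separation
    have hsep : ∀ q : ℚ, ∃ u : Set X, T q ⊆ u ∧ Disjoint (S q) u ∧ MeasurableSet u :=
      fun q => (hTa q).measurablySeparable (hSa q) (hdisj q).symm
    choose B hB1 hB2 hB3 using hsep
    set B' : ℚ → Set X := fun q => ⋃ q' : {q' : ℚ // q ≤ q'}, B q' with hB'def
    have hB'm : ∀ q, MeasurableSet (B' q) := fun q => MeasurableSet.iUnion fun q' => hB3 q'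
    have hmemB' : ∀ (q q' : ℚ), q ≤ q' → ∀ x, x ∈ B q' → x ∈ B' q :=
      fun q q' h x hx => mem_iUnion.2 ⟨⟨q', h⟩, hx⟩
    -- key pointwise facts
    have hK1 : ∀ x (q : ℚ), x ∈ B' q → ∀ t : ℚ, 0 < t →
        (t : ℝ) * (q : ℝ) ≤ g x ((t : ℝ) • e) := by
      intro x q hq t ht
      obtain ⟨⟨q', hqq'⟩, hx⟩ := mem_iUnion.1 hq
      have hnotS : x ∉ S q' := fun hS => (Set.disjoint_left.1 (hB2 q')) hS hx
      have hge : ¬ (g x ((t : ℝ) • e) < (t : ℝ) * (q' : ℝ)) := by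
        intro h; exact hnotS ⟨t, ht, h⟩
      push_neg at hge
      have htR : (0:ℝ) < (t : ℝ) := by exact_mod_cast ht
      have : (q : ℝ) ≤ (q' : ℝ) := by exact_mod_cast hqq'
      nlinarith
    have hK2 : ∀ x (q : ℚ), x ∈ B' q → ∀ t : ℝ, 0 < t →
        t * (q : ℝ) ≤ g x (t • e) := by
      intro x q hq t ht
      obtain ⟨s, hs0, hst⟩ := exists_rat_btwn ht
      have hs0' : 0 < s := by exact_mod_cast hs0
      have h1 := hK1 x q hq s hs0'
      have h2 := slope_mono (hconv x) (hzero x) e hs0 hst.le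
      have h3 : (q : ℝ) ≤ g x (((s:ℚ) : ℝ) • e) / ((s:ℚ) : ℝ) := by
        rw [le_div_iff₀ hs0]; linarith
      have h4 : (q : ℝ) ≤ g x (t • e) / t := h3.trans h2
      rw [le_div_iff₀ ht] at h4
      linarith
    -- the selected first coordinate
    set D : X → Set ℝ := fun x => (fun q : ℚ => (q : ℝ)) '' {q : ℚ | x ∈ B' q} with hDdef
    have hne : ∀ x, (D x).Nonempty := by
      intro x
      obtain ⟨q, hq⟩ := exists_rat_lt (-(g x ((-(1 : ℝ)) • e)))
      have hmemT : x ∈ T q := by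
        refine ⟨1, one_pos, ?_⟩
        push_cast
        linarith
      exact ⟨(q : ℝ), ⟨q, hmemB' q q le_rfl x (hB1 q hmemT), rfl⟩⟩
    have hbdd : ∀ x, BddAbove (D x) := by
      intro x
      refine ⟨g x ((1 : ℝ) • e), ?_⟩
      rintro r ⟨q, hq, rfl⟩
      have := hK1 x q hq 1 one_pos
      push_cast at this
      linarith
    set p0 : X → ℝ := fun x => sSup (D x) with hp0def
    have hP0 : ∀ x, ∀ t : ℝ, p0 x * t ≤ g x (t • e) := by
      intro x t
      rcases lt_trichotomy t 0 with htneg | rfl | htpos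
      · -- negative t
        set s : ℝ := -t with hsdef
        have hspos : 0 < s := by rw [hsdef]; linarith
        have claim : ∀ q : ℚ, (q : ℝ) * s < -(g x ((-s) • e)) → (q : ℝ) ≤ p0 x := by
          intro q hq
          obtain ⟨u, hu0, hus⟩ := exists_rat_btwn hspos
          have hu0' : 0 < u := by exact_mod_cast hu0
          have hmono := slope_mono (hconv x) (hzero x) (-e) hu0 hus.le
          have hrew1 : ((u:ℚ):ℝ) • (-e) = (-((u:ℚ):ℝ)) • e := by module
          have hrew2 : s • (-e) = (-s) • e := by module
          rw [hrew1, hrew2] at hmono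
          have h5 : g x ((-s) • e) / s < -(q : ℝ) := by
            rw [div_lt_iff₀ hspos]; linarith
          have h6 : g x ((-((u:ℚ):ℝ)) • e) / ((u:ℚ):ℝ) < -(q : ℝ) := lt_of_le_of_lt hmono h5
          rw [div_lt_iff₀ hu0] at h6
          have hmemT : x ∈ T q := ⟨u, hu0', by nlinarith⟩
          exact le_csSup (hbdd x) ⟨q, hmemB' q q le_rfl x (hB1 q hmemT), rfl⟩
        have hge : -(g x ((-s) • e)) / s ≤ p0 x := by
          by_contra hcon
          push_neg at hcon
          obtain ⟨q, hq1, hq2⟩ := exists_rat_btwn hcon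
          have hlt : (q : ℝ) * s < -(g x ((-s) • e)) := by
            rw [lt_div_iff₀ hspos] at hq2
            linarith
          exact absurd (claim q hlt) (not_le.2 hq1)
        have hts : t = -s := by rw [hsdef, neg_neg]
        rw [div_le_iff₀ hspos] at hge
        rw [hts, mul_neg]
        linarith
      · -- zero
        rw [zero_smul, hzero x, mul_zero]
      · -- positive t
        have hle : p0 x ≤ g x (t • e) / t := by
          refine csSup_le (hne x) ?_
          rintro r ⟨q, hq, rfl⟩
          have := hK2 x q hq t htpos
          rw [le_div_iff₀ htpos]
          linarith
        rw [le_div_iff₀ htpos] at hle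
        linarith
    -- measurability of p0
    have hp0m : Measurable p0 := by
      apply measurable_of_Ioi
      intro a
      have hrw : p0 ⁻¹' Ioi a = ⋃ q : {q : ℚ // a < (q : ℝ)}, B' q := by
        ext x
        simp only [mem_preimage, mem_Ioi, mem_iUnion]
        constructor
        · intro h
          obtain ⟨r, hrD, har⟩ := exists_lt_of_lt_csSup (hne x) h
          obtain ⟨q, hq, rfl⟩ := hrD
          exact ⟨⟨q, har⟩, hq⟩
        · rintro ⟨⟨q, haq⟩, hq⟩
          exact lt_of_lt_of_le haq (le_csSup (hbdd x) ⟨q, hq, rfl⟩)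
      rw [hrw]
      exact MeasurableSet.iUnion fun q => hB'm q
    -- full subgradient with first coordinate p0 x
    have hfull : ∀ x, ∃ P : Fin (n + 1) → ℝ, P 0 = p0 x ∧
        ∀ y, (∑ i, P i * y i) ≤ g x y := by
      intro x
      obtain ⟨qs, hqs⟩ := hsub x
      exact exists_subgrad_fix0 (g x) (hconv x) (hzero x) qs hqs (p0 x)
        (fun t => hP0 x t)
    choose P hPzero hPle using hfull
    -- the reduced function
    set Ecl : X → (Fin n → ℝ) → Set ℝ :=
      fun x y' => {r : ℝ | ∃ t : ℝ, r = g x (Fin.cons t y') - t * p0 x} with hEdef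
    have hEne : ∀ x y', (Ecl x y').Nonempty := fun x y' => ⟨_, 0, rfl⟩
    have hElb : ∀ x y', ∀ r ∈ Ecl x y', (∑ i, P x i.succ * y' i) ≤ r := by
      rintro x y' r ⟨t, rfl⟩
      have h1 := hPle x (Fin.cons t y')
      rw [Fin.sum_univ_succ] at h1
      simp only [Fin.cons_zero, Fin.cons_succ] at h1
      rw [hPzero x] at h1
      linarith
    have hEbdd : ∀ x y', BddBelow (Ecl x y') := fun x y' => ⟨_, hElb x y'⟩
    set g' : X → (Fin n → ℝ) → ℝ := fun x y' => sInf (Ecl x y') with hg'def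
    -- joint convexity inequality
    have hconslin : ∀ (a b t1 t2 : ℝ) (y1 y2 : Fin n → ℝ),
        (Fin.cons (a * t1 + b * t2) (a • y1 + b • y2) : Fin (n + 1) → ℝ)
          = a • (Fin.cons t1 y1 : Fin (n + 1) → ℝ) + b • (Fin.cons t2 y2 : Fin (n + 1) → ℝ) := by
      intro a b t1 t2 y1 y2
      funext i
      refine Fin.cases ?_ ?_ i
      · simp [Fin.cons_zero]
      · intro j
        simp [Fin.cons_succ]
    have hJ : ∀ x (t1 t2 : ℝ) (y1 y2 : Fin n → ℝ) (a b : ℝ), 0 ≤ a → 0 ≤ b → a + b = 1 →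
        g x (Fin.cons (a * t1 + b * t2) (a • y1 + b • y2)) - (a * t1 + b * t2) * p0 x
          ≤ a * (g x (Fin.cons t1 y1) - t1 * p0 x) + b * (g x (Fin.cons t2 y2) - t2 * p0 x) := by
      intro x t1 t2 y1 y2 a b ha hb hab
      have h1 := (hconv x).2 (Set.mem_univ (Fin.cons t1 y1 : Fin (n + 1) → ℝ))
        (Set.mem_univ (Fin.cons t2 y2 : Fin (n + 1) → ℝ)) ha hb hab
      rw [← hconslin] at h1
      simp only [smul_eq_mul] at h1
      nlinarith [h1]
    -- hypotheses for the reduced function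
    have hconv' : ∀ x, ConvexOn ℝ Set.univ (g' x) := by
      intro x
      refine ⟨convex_univ, ?_⟩
      intro y1 _ y2 _ a b ha hb hab
      simp only [smul_eq_mul]
      refine le_of_forall_pos_le_add fun ε hε => ?_
      obtain ⟨r1, hr1E, hr1⟩ := exists_lt_of_csInf_lt (hEne x y1)
        (show sInf (Ecl x y1) < g' x y1 + ε from lt_add_of_pos_right _ hε)
      obtain ⟨r2, hr2E, hr2⟩ := exists_lt_of_csInf_lt (hEne x y2)
        (show sInf (Ecl x y2) < g' x y2 + ε from lt_add_of_pos_right _ hε)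
      obtain ⟨t1, rfl⟩ := hr1E
      obtain ⟨t2, rfl⟩ := hr2E
      have hmem : g x (Fin.cons (a * t1 + b * t2) (a • y1 + b • y2))
          - (a * t1 + b * t2) * p0 x ∈ Ecl x (a • y1 + b • y2) := ⟨a * t1 + b * t2, rfl⟩
      have hchain : g' x (a • y1 + b • y2)
          ≤ a * (g x (Fin.cons t1 y1) - t1 * p0 x) + b * (g x (Fin.cons t2 y2) - t2 * p0 x) :=
        le_trans (csInf_le (hEbdd x _) hmem) (hJ x t1 t2 y1 y2 a b ha hb hab)
      have hb1 : a * (g x (Fin.cons t1 y1) - t1 * p0 x) ≤ a * (g' x y1 + ε) :=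
        mul_le_mul_of_nonneg_left hr1.le ha
      have hb2 : b * (g x (Fin.cons t2 y2) - t2 * p0 x) ≤ b * (g' x y2 + ε) :=
        mul_le_mul_of_nonneg_left hr2.le hb
      nlinarith [hchain]
    have hcons0 : ∀ t : ℝ, (Fin.cons t (0 : Fin n → ℝ) : Fin (n + 1) → ℝ) = t • e := by
      intro t
      funext i
      refine Fin.cases ?_ ?_ i
      · simp [Fin.cons_zero, hedef]
      · intro j
        simp [Fin.cons_succ, hedef, Pi.single_apply, (Fin.succ_ne_zero j)]
    have hzero' : ∀ x, g' x 0 = 0 := by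
      intro x
      refine le_antisymm ?_ ?_
      · refine csInf_le (hEbdd x 0) ⟨0, ?_⟩
        rw [hcons0 0, zero_smul, hzero x]
        ring
      · refine le_csInf (hEne x 0) ?_
        rintro r ⟨t, rfl⟩
        rw [hcons0 t]
        have := hP0 x t
        linarith
    have hsub' : ∀ x, ∃ p' : Fin n → ℝ, ∀ y', (∑ i, p' i * y' i) ≤ g' x y' :=
      fun x => ⟨fun i => P x i.succ, fun y' => le_csInf (hEne x y') (hElb x y')⟩
    have hlsa' : ∀ γ : ℝ, AnalyticSet {w : X × (Fin n → ℝ) | g' w.1 w.2 < γ} := by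
      intro γ
      have hAn := epi_analytic g hlsa
      have hrw : {w : X × (Fin n → ℝ) | g' w.1 w.2 < γ} = ⋃ t : ℚ,
          (fun w : X × (Fin n → ℝ) => ((w.1, Fin.cons ((t:ℚ) : ℝ) w.2), γ + ((t:ℚ) : ℝ) * p0 w.1))
            ⁻¹' {q : (X × (Fin (n + 1) → ℝ)) × ℝ | g q.1.1 q.1.2 < q.2} := by
        ext ⟨x, y'⟩
        simp only [mem_setOf_eq, mem_iUnion, mem_preimage]
        constructor
        · intro h
          obtain ⟨r, hrE, hr⟩ := exists_lt_of_csInf_lt (hEne x y') h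
          obtain ⟨t0, rfl⟩ := hrE
          have hFconv : ConvexOn ℝ Set.univ (fun t : ℝ => g x (Fin.cons t y') - t * p0 x) := by
            refine ⟨convex_univ, ?_⟩
            intro t1 _ t2 _ a b ha hb hab
            simp only [smul_eq_mul]
            have := hJ x t1 t2 y' y' a b ha hb hab
            have hyy : a • y' + b • y' = y' := by
              rw [← add_smul, hab, one_smul]
            rw [hyy] at this
            linarith
          obtain ⟨u, hu⟩ := rat_lt_of_convex hFconv hr
          exact ⟨u, by simpa using (by linarith [hu] : g x (Fin.cons ((u:ℚ):ℝ) y') < γ + ((u:ℚ):ℝ) * p0 x)⟩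
        · rintro ⟨t, ht⟩
          have hlt : g x (Fin.cons ((t:ℚ):ℝ) y') - ((t:ℚ):ℝ) * p0 x < γ := by linarith
          exact lt_of_le_of_lt (csInf_le (hEbdd x y') ⟨((t:ℚ):ℝ), rfl⟩) hlt
      rw [hrw]
      refine AnalyticSet.iUnion fun t => analyticSet_preimage_measurable hAn ?_
      refine Measurable.prod (Measurable.prod ?_ ?_) ?_
      · exact measurable_fst
      · refine measurable_pi_iff.2 fun i => ?_
        refine Fin.cases ?_ ?_ i
        · simp only [Fin.cons_zero]
          exact measurable_const
        · intro j
          simp only [Fin.cons_succ]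
          exact (measurable_pi_apply j).comp measurable_snd
      · exact ((hp0m.comp measurable_fst).const_mul _).const_add γ
    obtain ⟨p', hp'm, hp'le⟩ := IH g' hlsa' hconv' hzero' hsub'
    refine ⟨fun x => Fin.cons (p0 x) (p' x), ?_, ?_⟩
    · refine measurable_pi_iff.2 fun i => ?_
      refine Fin.cases ?_ ?_ i
      · simp only [Fin.cons_zero]
        exact hp0m
      · intro j
        simp only [Fin.cons_succ]
        exact measurable_pi_iff.1 hp'm j
    · intro x y
      have h1 := hp'le x (Fin.tail y)
      have h2 : g' x (Fin.tail y) ≤ g x y - y 0 * p0 x := by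
        refine csInf_le (hEbdd x (Fin.tail y)) ⟨y 0, ?_⟩
        rw [Fin.cons_self_tail]
      rw [Fin.sum_univ_succ]
      simp only [Fin.cons_zero, Fin.cons_succ]
      have h3 : (∑ i : Fin n, p' x i * y i.succ) = ∑ i : Fin n, p' x i * Fin.tail y i := rfl
      rw [h3]
      linarith


/-- Borel subgradient selection for a lower semi-analytic family of convex
functions vanishing at the origin with nonempty subdifferential at 0. -/
theorem borel_subgradient_selection {X : Type*} [TopologicalSpace X] [PolishSpace X]
    [MeasurableSpace X] [BorelSpace X]
    {n : ℕ} (g : X → (Fin n → ℝ) → ℝ)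
    (hlsa : ∀ γ : ℝ, AnalyticSet {p : X × (Fin n → ℝ) | g p.1 p.2 < γ})
    (hconv : ∀ x, ConvexOn ℝ Set.univ (g x))
    (hzero : ∀ x, g x 0 = 0)
    (hsub : ∀ x, ∃ p : Fin n → ℝ, ∀ y, (∑ i, p i * y i) ≤ g x y) :
    ∃ p : X → Fin n → ℝ, Measurable p ∧
      ∀ x y, (∑ i, p x i * y i) ≤ g x y :=
  selection_main n g hlsa hconv hzero hsub
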